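/- arXiv:2301.06586 — 2 statements merged into one kernel-verified Lean document; each statement's English description precedes it below -/
import Mathlib

section
/- Let n be a positive integer and let B = (n+1)·I − J be the n × n real matrix where I is the identity matrix and J is the all-ones matrix. Then there exists ε > 0 such that for every real n × n matrix A with all entries within ε of the corresponding entries of B, and for all distinct lattice points y, z ∈ Λ_A, the intersection (F_A + y) ∩ (F_A + z) has Lebesgue measure zero. -/
/-- The lattice `Λ_A = { A v : v ∈ ℤⁿ }` generated by the columns of `A`. -/
def latticeOf {n : ℕ} (A : Matrix (Fin n) (Fin n) ℝ) : Set (Fin n → ℝ) :=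
  { x | ∃ v : Fin n → ℤ, x = A.mulVec fun i => (v i : ℝ) }

/-- The cuboid `C_A = Π_i [0, a_{i,i}]`. -/
def cuboid {n : ℕ} (A : Matrix (Fin n) (Fin n) ℝ) : Set (Fin n → ℝ) :=
  Set.univ.pi fun i => Set.Icc 0 (A i i)

/-- The tile `F_A`: the closure of `C_A` minus its translates by column sums over
nonempty subsets of `[n]`. -/
def FA {n : ℕ} (A : Matrix (Fin n) (Fin n) ℝ) : Set (Fin n → ℝ) :=
  closure (cuboid A \
    ⋃ (S : Finset (Fin n)) (_ : S.Nonempty),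
      (fun x : Fin n → ℝ => x + fun r => ∑ i ∈ S, A r i) '' cuboid A)

open Finset MeasureTheory Set

namespace TilingAux

variable {n : ℕ}

/-- The translation vector attached to a subset `S`: row sums of `A` over columns in `S`. -/
def cs (A : Matrix (Fin n) (Fin n) ℝ) (S : Finset (Fin n)) : Fin n → ℝ :=
  fun r => ∑ i ∈ S, A r i

/-- Our choice of `ε`. -/
noncomputable def ee (n : ℕ) : ℝ := 1 / (4 * n ^ 2 + 4)

lemma ee_pos : 0 < ee n := by
  have : (0:ℝ) < 4 * n ^ 2 + 4 := by positivity
  exact div_pos one_pos this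

lemma ee_le : ee n ≤ 1 / 4 := by
  unfold ee
  rw [div_le_div_iff₀ (by positivity) (by norm_num)]
  nlinarith [sq_nonneg (n:ℝ)]

lemma n_mul_ee_le : (n : ℝ) * ee n ≤ 1 / 4 := by
  unfold ee
  rw [mul_one_div, div_le_div_iff₀ (by positivity) (by norm_num)]
  nlinarith [sq_nonneg ((n:ℝ) - 1)]

/-- Hypotheses on `A`: entries `ε`-close to those of `B = (n+1)I - J`. -/
structure Good (n : ℕ) (A : Matrix (Fin n) (Fin n) ℝ) : Prop where
  hn : 0 < n
  hd : ∀ i, |A i i - n| < ee n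
  ho : ∀ i j, i ≠ j → |A i j + 1| < ee n

namespace Good

variable {A : Matrix (Fin n) (Fin n) ℝ} (hA : Good n A)
include hA

lemma one_le_n : (1:ℝ) ≤ n := by exact_mod_cast hA.hn

lemma diag_lb (i : Fin n) : (n:ℝ) - ee n < A i i := by
  have := abs_lt.mp (hA.hd i); linarith [this.1]

lemma diag_ub (i : Fin n) : A i i < (n:ℝ) + ee n := by
  have := abs_lt.mp (hA.hd i); linarith [this.2]

lemma diag_pos (i : Fin n) : 0 < A i i := by
  have := hA.diag_lb i
  have h1 := hA.one_le_n
  have h2 : ee n ≤ 1/4 := ee_le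
  linarith

lemma off_lb {i j : Fin n} (h : i ≠ j) : -1 - ee n < A i j := by
  have := abs_lt.mp (hA.ho i j h); linarith [this.1]

lemma off_ub {i j : Fin n} (h : i ≠ j) : A i j < -1 + ee n := by
  have := abs_lt.mp (hA.ho i j h); linarith [this.2]

lemma off_nonpos {i j : Fin n} (h : i ≠ j) : A i j ≤ 0 := by
  have := hA.off_ub h
  have : A i j < -1 + 1/4 := by linarith [ee_le (n := n)]
  linarith

lemma off_abs {i j : Fin n} (h : i ≠ j) : |A i j| ≤ 1 + ee n := by
  rw [abs_le]
  constructor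
  · linarith [hA.off_lb h]
  · have h1 := hA.off_ub h
    have := ee_pos (n := n)
    linarith

/-- Row sums over a set not containing `i` are nonpositive. -/
lemma cs_nonpos {S : Finset (Fin n)} {i : Fin n} (h : i ∉ S) : cs A S i ≤ 0 := by
  apply Finset.sum_nonpos
  intro j hj
  exact hA.off_nonpos (fun he => h (he ▸ hj))

/-- Row sums over a set containing `i` are positive. -/
lemma cs_pos {S : Finset (Fin n)} {i : Fin n} (h : i ∈ S) : 0 < cs A S i := by
  have hsplit : cs A S i = (∑ j ∈ S.erase i, A i j) + A i i := by
    unfold cs; exact (Finset.sum_erase_add S _ h).symm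
  have hcard : ((S.erase i).card : ℝ) ≤ (n:ℝ) - 1 := by
    have h1 : (S.erase i).card ≤ (Finset.univ.erase i).card :=
      Finset.card_le_card (Finset.erase_subset_erase i (Finset.subset_univ S))
    have h2 : (Finset.univ.erase i).card = n - 1 := by
      rw [Finset.card_erase_of_mem (Finset.mem_univ i)]; simp
    have h3 : (S.erase i).card ≤ n - 1 := h2 ▸ h1
    have h4 : (1:ℕ) ≤ n := hA.hn
    have := Nat.cast_le (α := ℝ) |>.mpr h3
    have h5 : ((n - 1 : ℕ) : ℝ) = (n:ℝ) - 1 := by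
      rw [Nat.cast_sub h4]; norm_num
    linarith [h5 ▸ this]
  have hterm : ∀ j ∈ S.erase i, -(1 + ee n) ≤ A i j := by
    intro j hj
    have hji : j ≠ i := Finset.ne_of_mem_erase hj
    have := hA.off_lb (Ne.symm hji)
    linarith
  have hsum : -(((S.erase i).card : ℝ) * (1 + ee n)) ≤ ∑ j ∈ S.erase i, A i j := by
    calc -(((S.erase i).card : ℝ) * (1 + ee n))
        = ∑ _j ∈ S.erase i, -(1 + ee n) := by
          rw [Finset.sum_const, nsmul_eq_mul]; ring
      _ ≤ ∑ j ∈ S.erase i, A i j := Finset.sum_le_sum hterm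
  have hee : ee n ≤ 1/4 := ee_le
  have heen : (n:ℝ) * ee n ≤ 1/4 := n_mul_ee_le
  have hd := hA.diag_lb i
  have hepos := ee_pos (n := n)
  have hcard0 : (0:ℝ) ≤ ((S.erase i).card : ℝ) := Nat.cast_nonneg _
  rw [hsplit]
  nlinarith

end Good

/-- Membership in a translated cuboid, coordinatewise. -/
lemma mem_trans {A : Matrix (Fin n) (Fin n) ℝ} {S : Finset (Fin n)} {x : Fin n → ℝ} :
    x ∈ (fun y : Fin n → ℝ => y + cs A S) '' cuboid A ↔
      ∀ i, cs A S i ≤ x i ∧ x i ≤ A i i + cs A S i := by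
  constructor
  · rintro ⟨a, ha, rfl⟩ i
    have h := ha i (Set.mem_univ i)
    simp only [Set.mem_Icc] at h
    show cs A S i ≤ a i + cs A S i ∧ a i + cs A S i ≤ A i i + cs A S i
    exact ⟨by linarith [h.1], by linarith [h.2]⟩
  · intro h
    refine ⟨x - cs A S, fun i _ => ?_, by simp⟩
    simp only [Set.mem_Icc, Pi.sub_apply]
    exact ⟨by linarith [(h i).1], by linarith [(h i).2]⟩

lemma cuboid_mem {A : Matrix (Fin n) (Fin n) ℝ} {x : Fin n → ℝ} :
    x ∈ cuboid A ↔ ∀ i, 0 ≤ x i ∧ x i ≤ A i i := by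
  simp only [cuboid, Set.mem_pi, Set.mem_univ, forall_true_left, Set.mem_Icc, true_implies]

/-- The greedy augmentation process: starting from a partial set `T` of "extra" columns
satisfying the invariant, we can enlarge it so that additionally all points outside are
bounded above. -/
lemma greedy {A : Matrix (Fin n) (Fin n) ℝ} (hA : Good n A) (x : Fin n → ℝ)
    (S₀ : Finset (Fin n)) :
    ∀ N : ℕ, ∀ T : Finset (Fin n), (∀ i ∈ T, i ∉ S₀) →
      (Finset.univ \ (S₀ ∪ T)).card ≤ N →
      (∀ i ∈ T, cs A (S₀ ∪ T) i ≤ x i) →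
      ∃ T' : Finset (Fin n), (∀ i ∈ T', i ∉ S₀) ∧
        (∀ i ∈ T', cs A (S₀ ∪ T') i ≤ x i) ∧
        (∀ i, i ∉ S₀ → i ∉ T' → x i ≤ A i i + cs A (S₀ ∪ T') i) := by
  intro N
  induction N with
  | zero =>
    intro T hT hcard hinv
    refine ⟨T, hT, hinv, fun i hiS hiT => ?_⟩
    exfalso
    have hmem : i ∈ Finset.univ \ (S₀ ∪ T) := by
      simp [Finset.mem_sdiff, hiS, hiT]
    have := Finset.card_pos.mpr ⟨i, hmem⟩
    omega
  | succ N ih =>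
    intro T hT hcard hinv
    by_cases hall : ∀ i, i ∉ S₀ → i ∉ T → x i ≤ A i i + cs A (S₀ ∪ T) i
    · exact ⟨T, hT, hinv, hall⟩
    · push_neg at hall
      obtain ⟨j, hjS, hjT, hj⟩ := hall
      have hjU : j ∉ S₀ ∪ T := by simp [hjS, hjT]
      have hins : ∀ i : Fin n, S₀ ∪ insert j T = insert j (S₀ ∪ T) := fun _ => by
        rw [Finset.union_insert]
      have hsum : ∀ i : Fin n, cs A (S₀ ∪ insert j T) i = A i j + cs A (S₀ ∪ T) i := by
        intro i
        unfold cs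
        rw [hins i, Finset.sum_insert hjU]
      refine ih (insert j T) ?_ ?_ ?_
      · intro i hi
        rcases Finset.mem_insert.mp hi with rfl | hi
        · exact hjS
        · exact hT i hi
      · have hj' : j ∈ Finset.univ \ (S₀ ∪ T) := by simp [Finset.mem_sdiff, hjS, hjT]
        have : Finset.univ \ (S₀ ∪ insert j T) = (Finset.univ \ (S₀ ∪ T)).erase j := by
          rw [Finset.union_insert, Finset.sdiff_insert]
        rw [this, Finset.card_erase_of_mem hj']
        omega
      · intro i hi
        rcases Finset.mem_insert.mp hi with rfl | hi
        · rw [hsum i]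
          linarith
        · rw [hsum i]
          have hij : i ≠ j := fun he => hjT (he ▸ hi)
          have := hA.off_nonpos hij
          have := hinv i hi
          linarith

/-- Main combinatorial step, for `v ≥ 0`: a point of the cuboid lying above `A v`
lies in some translated cuboid `C_A + A 1_S`, `S` nonempty. -/
lemma exists_good_S {A : Matrix (Fin n) (Fin n) ℝ} (hA : Good n A)
    (x : Fin n → ℝ) (v : Fin n → ℤ)
    (hv0 : ∀ i, 0 ≤ v i) (hvne : v ≠ 0) (hv2 : ∀ i j, v i - v j ≤ 1)
    (hx0 : ∀ i, 0 ≤ x i) (hx1 : ∀ i, x i ≤ A i i)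
    (hlow : ∀ i, (A.mulVec fun j => (v j : ℝ)) i ≤ x i) :
    ∃ S : Finset (Fin n), S.Nonempty ∧ ∀ i, cs A S i ≤ x i ∧ x i ≤ A i i + cs A S i := by
  have hne : (Finset.univ : Finset (Fin n)).Nonempty := ⟨⟨0, hA.hn⟩, Finset.mem_univ _⟩
  obtain ⟨p, -, hp⟩ := Finset.univ.exists_max_image v hne
  set m : ℤ := v p with hm
  have hm1 : 1 ≤ m := by
    obtain ⟨q, hq⟩ := Function.ne_iff.mp hvne
    have h1 := hv0 q
    have h2 := hp q (Finset.mem_univ q)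
    simp only [Pi.zero_apply] at hq
    omega
  classical
  set S₀ : Finset (Fin n) := Finset.univ.filter (fun i => v i = m) with hS₀
  have hpS₀ : p ∈ S₀ := by simp [hS₀, hm]
  have hrep : ∀ j, j ∉ S₀ → v j = m - 1 := by
    intro j hj
    have h1 : v j ≤ m := hp j (Finset.mem_univ j)
    have h2 : v j ≠ m := by
      intro he; exact hj (by simp [hS₀, he])
    have h3 : m - v j ≤ 1 := hv2 p j
    omega
  have hAv_eq : ∀ i, (A.mulVec fun j => (v j : ℝ)) i
      = ((m - 1 : ℤ) : ℝ) * cs A Finset.univ i + cs A S₀ i := by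
    intro i
    have hval : ∀ j, ((v j : ℤ) : ℝ) = ((m - 1 : ℤ) : ℝ) + (if j ∈ S₀ then (1:ℝ) else 0) := by
      intro j
      by_cases hj : j ∈ S₀
      · have hvj : v j = m := by simpa [hS₀] using hj
        rw [hvj, if_pos hj]
        push_cast
        ring
      · rw [hrep j hj, if_neg hj]
        simp
    show (∑ j, A i j * ((v j : ℤ) : ℝ)) = _
    calc (∑ j, A i j * ((v j : ℤ) : ℝ))
        = ∑ j, (A i j * ((m - 1 : ℤ) : ℝ) + A i j * (if j ∈ S₀ then (1:ℝ) else 0)) := by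
          refine Finset.sum_congr rfl fun j _ => ?_
          rw [hval j]; ring
      _ = (∑ j, A i j * ((m - 1 : ℤ) : ℝ)) + ∑ j, A i j * (if j ∈ S₀ then (1:ℝ) else 0) :=
          Finset.sum_add_distrib
      _ = ((m - 1 : ℤ) : ℝ) * cs A Finset.univ i + cs A S₀ i := by
          congr 1
          · rw [← Finset.sum_mul]; unfold cs; ring
          · unfold cs
            rw [Finset.sum_congr rfl (fun j _ => by rw [mul_ite, mul_one, mul_zero]),
              Finset.sum_ite_mem, Finset.univ_inter]
  obtain ⟨T, hT1, hT2, hT3⟩ := greedy hA x S₀ n ∅ (by simp) (by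
      simpa using (Finset.card_le_univ _).trans_eq (Fintype.card_fin n)) (by simp)
  refine ⟨S₀ ∪ T, ⟨p, Finset.mem_union_left _ hpS₀⟩, fun i => ?_⟩
  have hcs_un : cs A (S₀ ∪ T) i = cs A S₀ i + cs A T i := by
    unfold cs
    exact Finset.sum_union (Finset.disjoint_left.mpr fun a haS haT => hT1 a haT haS)
  by_cases hi0 : i ∈ S₀
  · have hiT : i ∉ T := fun h => hT1 i h hi0
    have hTn : cs A T i ≤ 0 := hA.cs_nonpos hiT
    have hlow' := hlow i
    rw [hAv_eq i] at hlow'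
    have hk : (0:ℝ) ≤ ((m - 1 : ℤ) : ℝ) := by exact_mod_cast (by omega : (0:ℤ) ≤ m - 1)
    have hr : 0 < cs A Finset.univ i := hA.cs_pos (Finset.mem_univ i)
    have hmul : 0 ≤ ((m - 1 : ℤ) : ℝ) * cs A Finset.univ i := mul_nonneg hk hr.le
    have hpos : 0 < cs A (S₀ ∪ T) i := hA.cs_pos (Finset.mem_union_left _ hi0)
    exact ⟨by rw [hcs_un]; linarith, by linarith [hx1 i]⟩
  · by_cases hiT : i ∈ T
    · have hpos : 0 < cs A (S₀ ∪ T) i := hA.cs_pos (Finset.mem_union_right _ hiT)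
      exact ⟨hT2 i hiT, by linarith [hx1 i]⟩
    · have hiU : i ∉ S₀ ∪ T := by simp [hi0, hiT]
      exact ⟨le_trans (hA.cs_nonpos hiU) (hx0 i), hT3 i hi0 hiT⟩

/-- Bound on the integer vector: `|v i| ≤ 2n` whenever `|A v| ≤ diag A` pointwise. -/
lemma v_bound {A : Matrix (Fin n) (Fin n) ℝ} (hA : Good n A) (v : Fin n → ℤ)
    (hAv : ∀ i, |(A.mulVec fun j => (v j : ℝ)) i| ≤ A i i) :
    ∀ l, |((v l : ℤ) : ℝ)| ≤ 2 * n := by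
  have hne : (Finset.univ : Finset (Fin n)).Nonempty := ⟨⟨0, hA.hn⟩, Finset.mem_univ _⟩
  obtain ⟨p, -, hp⟩ := Finset.univ.exists_max_image (fun i => |((v i : ℤ) : ℝ)|) hne
  set M : ℝ := |((v p : ℤ) : ℝ)| with hM
  have hM0 : 0 ≤ M := abs_nonneg _
  have hMle : ∀ l, |((v l : ℤ) : ℝ)| ≤ M := fun l => hp l (Finset.mem_univ l)
  suffices hM2 : M ≤ 2 * n by
    intro l; exact (hMle l).trans hM2
  -- lower bound on |(A v)_p|
  have hsplit : (A.mulVec fun j => (v j : ℝ)) p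
      = A p p * ((v p : ℤ) : ℝ) + ∑ j ∈ Finset.univ.erase p, A p j * ((v j : ℤ) : ℝ) := by
    show (∑ j, A p j * ((v j : ℤ) : ℝ)) = _
    rw [← Finset.sum_erase_add _ _ (Finset.mem_univ p)]
    ring
  have htail : |∑ j ∈ Finset.univ.erase p, A p j * ((v j : ℤ) : ℝ)|
      ≤ ((n:ℝ) - 1) * ((1 + ee n) * M) := by
    calc |∑ j ∈ Finset.univ.erase p, A p j * ((v j : ℤ) : ℝ)|
        ≤ ∑ j ∈ Finset.univ.erase p, |A p j * ((v j : ℤ) : ℝ)| :=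
          Finset.abs_sum_le_sum_abs _ _
      _ ≤ ∑ _j ∈ Finset.univ.erase p, (1 + ee n) * M := by
          refine Finset.sum_le_sum fun j hj => ?_
          rw [abs_mul]
          have hjp : j ≠ p := Finset.ne_of_mem_erase hj
          exact mul_le_mul (hA.off_abs (Ne.symm hjp)) (hMle j) (abs_nonneg _)
            (by have := ee_pos (n := n); linarith)
      _ = ((Finset.univ.erase p).card : ℝ) * ((1 + ee n) * M) := by
          rw [Finset.sum_const, nsmul_eq_mul]
      _ ≤ ((n:ℝ) - 1) * ((1 + ee n) * M) := by
          have h2 : (Finset.univ.erase p).card = n - 1 := by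
            rw [Finset.card_erase_of_mem (Finset.mem_univ p)]; simp
          have h4 : (1:ℕ) ≤ n := hA.hn
          have h5 : ((Finset.univ.erase p).card : ℝ) = (n:ℝ) - 1 := by
            rw [h2, Nat.cast_sub h4]; norm_num
          rw [h5]
  have hhead : (n - ee n) * M ≤ |A p p * ((v p : ℤ) : ℝ)| := by
    rw [abs_mul, abs_of_pos (hA.diag_pos p)]
    exact mul_le_mul (hA.diag_lb p).le le_rfl hM0 (hA.diag_pos p).le
  have hAvp := hAv p
  have hup : A p p < (n:ℝ) + ee n := hA.diag_ub p
  have hlow : (n - ee n) * M - ((n:ℝ) - 1) * ((1 + ee n) * M)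
      ≤ |(A.mulVec fun j => (v j : ℝ)) p| := by
    rw [hsplit]
    calc (n - ee n) * M - ((n:ℝ) - 1) * ((1 + ee n) * M)
        ≤ |A p p * ((v p : ℤ) : ℝ)| - |∑ j ∈ Finset.univ.erase p, A p j * ((v j : ℤ) : ℝ)| := by
          linarith
      _ ≤ _ := by
          have := abs_sub_abs_le_abs_sub (A p p * ((v p : ℤ) : ℝ))
            (-(∑ j ∈ Finset.univ.erase p, A p j * ((v j : ℤ) : ℝ)))
          simp only [abs_neg, sub_neg_eq_add] at this
          exact this
  have hkey : (1 - (n:ℝ) * ee n) * M ≤ (n:ℝ) + ee n := by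
    have : (n - ee n) * M - ((n:ℝ) - 1) * ((1 + ee n) * M) = (1 - (n:ℝ) * ee n) * M := by
      ring
    linarith [hlow.trans (hAvp.trans hup.le)]
  have h1 : (1:ℝ) ≤ n := hA.one_le_n
  have h2 : (n:ℝ) * ee n ≤ 1/4 := n_mul_ee_le
  have h3 : ee n ≤ 1/4 := ee_le
  nlinarith

/-- Two consecutive values: `v i - v j ≤ 1`. -/
lemma vdiff_le {A : Matrix (Fin n) (Fin n) ℝ} (hA : Good n A) (v : Fin n → ℤ)
    (hAv : ∀ i, |(A.mulVec fun j => (v j : ℝ)) i| ≤ A i i) :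
    ∀ i j, v i - v j ≤ 1 := by
  have hvb := v_bound hA v hAv
  intro i j
  rcases eq_or_ne i j with rfl | hij
  · omega
  -- work over ℝ
  have hkey : ((n:ℝ) + 1) * |((v i : ℤ) : ℝ) - ((v j : ℤ) : ℝ)| < 2 * ((n:ℝ) + 1) := by
    set vr : Fin n → ℝ := fun l => ((v l : ℤ) : ℝ) with hvr
    have hDsum : (∑ l, (A i l - A j l) * vr l)
        = (A.mulVec fun j => (v j : ℝ)) i - (A.mulVec fun j => (v j : ℝ)) j := by
      show _ = (∑ l, A i l * vr l) - ∑ l, A j l * vr l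
      rw [← Finset.sum_sub_distrib]
      refine Finset.sum_congr rfl fun l _ => by ring
    set E : Fin n → ℝ := fun l => (A i l - A j l)
      - ((n:ℝ) + 1) * ((if l = i then (1:ℝ) else 0) - (if l = j then (1:ℝ) else 0)) with hE
    have hdelta : (∑ l, ((n:ℝ) + 1) * ((if l = i then (1:ℝ) else 0)
        - (if l = j then (1:ℝ) else 0)) * vr l) = ((n:ℝ) + 1) * (vr i - vr j) := by
      have e1 : ∀ l, ((n:ℝ) + 1) * ((if l = i then (1:ℝ) else 0)
          - (if l = j then (1:ℝ) else 0)) * vr l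
          = ((n:ℝ) + 1) * ((if l = i then vr l else 0) - (if l = j then vr l else 0)) := by
        intro l
        rcases eq_or_ne l i with rfl | h1
        · rw [if_pos rfl, if_pos rfl, if_neg hij, if_neg hij]
          ring
        · rcases eq_or_ne l j with rfl | h2
          · rw [if_neg h1, if_neg h1, if_pos rfl, if_pos rfl]
            ring
          · rw [if_neg h1, if_neg h1, if_neg h2, if_neg h2]
            ring
      rw [Finset.sum_congr rfl fun l _ => e1 l, ← Finset.mul_sum, Finset.sum_sub_distrib,
        Finset.sum_ite_eq' Finset.univ i vr, Finset.sum_ite_eq' Finset.univ j vr]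
      simp
    have hsplit : (∑ l, (A i l - A j l) * vr l)
        = ((n:ℝ) + 1) * (vr i - vr j) + ∑ l, E l * vr l := by
      rw [← hdelta, ← Finset.sum_add_distrib]
      refine Finset.sum_congr rfl fun l _ => ?_
      simp only [hE]
      ring
    have hEbound : ∀ l, |E l| ≤ 2 * ee n := by
      intro l
      simp only [hE]
      rcases eq_or_ne l i with rfl | hli
      · rw [if_pos rfl, if_neg hij]
        have h1 := hA.hd l
        have h2 := hA.ho j l (Ne.symm hij)
        have he : A l l - A j l - ((n:ℝ) + 1) * (1 - 0) = (A l l - n) - (A j l + 1) := by ring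
        rw [he]
        calc |(A l l - n) - (A j l + 1)| ≤ |A l l - (n:ℝ)| + |A j l + 1| := abs_sub _ _
          _ ≤ 2 * ee n := by linarith
      · rcases eq_or_ne l j with rfl | hlj
        · rw [if_neg hli, if_pos rfl]
          have h1 := hA.hd l
          have h2 := hA.ho i l (Ne.symm hli)
          have he : A i l - A l l - ((n:ℝ) + 1) * (0 - 1) = (A i l + 1) - (A l l - n) := by ring
          rw [he]
          calc |(A i l + 1) - (A l l - n)| ≤ |A i l + 1| + |A l l - (n:ℝ)| := abs_sub _ _
            _ ≤ 2 * ee n := by linarith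
        · rw [if_neg hli, if_neg hlj]
          have h1 := hA.ho i l (Ne.symm hli)
          have h2 := hA.ho j l (Ne.symm hlj)
          have he : A i l - A j l - ((n:ℝ) + 1) * (0 - 0) = (A i l + 1) - (A j l + 1) := by
            ring
          rw [he]
          calc |(A i l + 1) - (A j l + 1)| ≤ |A i l + 1| + |A j l + 1| := abs_sub _ _
            _ ≤ 2 * ee n := by linarith
    have hErr : |∑ l, E l * vr l| ≤ (n:ℝ) * (2 * ee n * (2 * n)) := by
      calc |∑ l, E l * vr l| ≤ ∑ l, |E l * vr l| := Finset.abs_sum_le_sum_abs _ _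
        _ ≤ ∑ _l : Fin n, 2 * ee n * (2 * n) := by
            refine Finset.sum_le_sum fun l _ => ?_
            rw [abs_mul]
            exact mul_le_mul (hEbound l) (hvb l) (abs_nonneg _)
              (by linarith [ee_pos (n := n)])
        _ = (n:ℝ) * (2 * ee n * (2 * n)) := by
            rw [Finset.sum_const, nsmul_eq_mul]
            simp
    have hAvi := hAv i
    have hAvj := hAv j
    have hubi := hA.diag_ub i
    have hubj := hA.diag_ub j
    have habs : ((n:ℝ) + 1) * |vr i - vr j| = |((n:ℝ) + 1) * (vr i - vr j)| := by
      rw [abs_mul, abs_of_pos (show (0:ℝ) < (n:ℝ) + 1 by positivity)]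
    have hsum_bound : |∑ l, (A i l - A j l) * vr l| ≤ 2 * ((n:ℝ) + ee n) := by
      rw [hDsum]
      calc |(A.mulVec fun j => (v j : ℝ)) i - (A.mulVec fun j => (v j : ℝ)) j|
          ≤ |(A.mulVec fun j => (v j : ℝ)) i| + |(A.mulVec fun j => (v j : ℝ)) j| :=
            abs_sub _ _
        _ ≤ 2 * ((n:ℝ) + ee n) := by linarith
    have htri : |((n:ℝ) + 1) * (vr i - vr j)|
        ≤ |∑ l, (A i l - A j l) * vr l| + |∑ l, E l * vr l| := by
      have he : ((n:ℝ) + 1) * (vr i - vr j)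
          = (∑ l, (A i l - A j l) * vr l) - ∑ l, E l * vr l := by
        rw [hsplit]; ring
      rw [he]
      exact abs_sub _ _
    have heps : (n:ℝ) * (2 * ee n * (2 * n)) < 1 := by
      have : (n:ℝ) * (2 * ee n * (2 * n)) = 4 * (n:ℝ)^2 * ee n := by ring
      rw [this]
      unfold ee
      rw [mul_one_div, div_lt_one (by positivity)]
      linarith
    have h3 : ee n ≤ 1/4 := ee_le
    rw [habs]
    calc |((n:ℝ) + 1) * (vr i - vr j)|
        ≤ 2 * ((n:ℝ) + ee n) + (n:ℝ) * (2 * ee n * (2 * n)) := by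
          linarith [htri, hsum_bound, hErr]
      _ < 2 * ((n:ℝ) + 1) := by linarith
  have hpos : (0:ℝ) < (n:ℝ) + 1 := by positivity
  have h2 : |((v i : ℤ) : ℝ) - ((v j : ℤ) : ℝ)| < 2 :=
    lt_of_mul_lt_mul_left (by linarith [hkey]) hpos.le
  have h3 : |(v i - v j : ℤ)| < 2 := by
    have : |((v i - v j : ℤ) : ℝ)| < 2 := by push_cast; push_cast at h2; convert h2 using 2
    exact_mod_cast this
  have h4 := abs_lt.mp h3
  omega

/-- The key covering lemma: a point of `C_A ∩ (C_A + A v)`, `v ≠ 0`, lies in a translate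
`C_A + A 1_S` either directly or after translating back by `A v`. -/
lemma key_lemma {A : Matrix (Fin n) (Fin n) ℝ} (hA : Good n A)
    (v : Fin n → ℤ) (hvne : v ≠ 0) (x : Fin n → ℝ)
    (hx : x ∈ cuboid A) (hx' : x - (A.mulVec fun j => (v j : ℝ)) ∈ cuboid A) :
    ∃ S : Finset (Fin n), S.Nonempty ∧
      ((∀ i, cs A S i ≤ x i ∧ x i ≤ A i i + cs A S i) ∨
       (∀ i, cs A S i ≤ x i - (A.mulVec fun j => (v j : ℝ)) i ∧
          x i - (A.mulVec fun j => (v j : ℝ)) i ≤ A i i + cs A S i)) := by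
  rw [cuboid_mem] at hx hx'
  have hx'' : ∀ i, 0 ≤ x i - (A.mulVec fun j => (v j : ℝ)) i ∧
      x i - (A.mulVec fun j => (v j : ℝ)) i ≤ A i i := by
    intro i
    have := hx' i
    simpa [Pi.sub_apply] using this
  have hAv : ∀ i, |(A.mulVec fun j => (v j : ℝ)) i| ≤ A i i := by
    intro i
    rw [abs_le]
    constructor
    · linarith [(hx'' i).2, (hx i).1]
    · linarith [(hx'' i).1, (hx i).2]
  have hv2 := vdiff_le hA v hAv
  by_cases hpos : ∀ i, 0 ≤ v i
  · obtain ⟨S, hS, hSgood⟩ := exists_good_S hA x v hpos hvne hv2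
      (fun i => (hx i).1) (fun i => (hx i).2) (fun i => by linarith [(hx'' i).1])
    exact ⟨S, hS, Or.inl hSgood⟩
  · push_neg at hpos
    obtain ⟨i₀, hi₀⟩ := hpos
    have hneg : ∀ i, v i ≤ 0 := by
      intro i
      have := hv2 i i₀
      omega
    have hcast : (fun j => (((-v) j : ℤ) : ℝ)) = -(fun j => ((v j : ℤ) : ℝ)) := by
      funext j
      simp
    have hmv : (A.mulVec fun j => (((-v) j : ℤ) : ℝ)) = -(A.mulVec fun j => (v j : ℝ)) := by
      rw [hcast, Matrix.mulVec_neg]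
    obtain ⟨S, hS, hSgood⟩ := exists_good_S hA (x - (A.mulVec fun j => (v j : ℝ))) (-v)
      (fun i => by have := hneg i; simp; omega)
      (neg_ne_zero.mpr hvne)
      (fun i j => by have := hv2 j i; simp; omega)
      (fun i => (hx'' i).1) (fun i => (hx'' i).2)
      (fun i => by
        rw [hmv]
        have h0 := (hx i).1
        simp only [Pi.neg_apply, Pi.sub_apply]
        linarith)
    refine ⟨S, hS, Or.inr fun i => ?_⟩
    have := hSgood i
    simpa [Pi.sub_apply] using this

/-- `F_A` is contained in the cuboid. -/
lemma FA_subset_cuboid (A : Matrix (Fin n) (Fin n) ℝ) : FA A ⊆ cuboid A :=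
  closure_minimal Set.diff_subset (isClosed_set_pi fun i _ => isClosed_Icc)

/-- Points of `F_A` avoid the interiors of the removed translates. -/
lemma FA_not_mem_interior {A : Matrix (Fin n) (Fin n) ℝ} {S : Finset (Fin n)}
    (hS : S.Nonempty) {x : Fin n → ℝ} (hx : x ∈ FA A) :
    x ∉ interior ((fun y : Fin n → ℝ => y + cs A S) '' cuboid A) := by
  have hsub : cuboid A \
      (⋃ (S : Finset (Fin n)) (_ : S.Nonempty),
        (fun x : Fin n → ℝ => x + fun r => ∑ i ∈ S, A r i) '' cuboid A)
      ⊆ ((fun y : Fin n → ℝ => y + cs A S) '' cuboid A)ᶜ := by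
    intro t ht hmem
    exact ht.2 (Set.mem_iUnion₂.mpr ⟨S, hS, hmem⟩)
  have h2 : FA A ⊆ closure (((fun y : Fin n → ℝ => y + cs A S) '' cuboid A)ᶜ) :=
    closure_mono hsub
  have h3 := h2 hx
  rw [closure_compl] at h3
  exact h3

/-- Translation invariance of volume for images. -/
lemma vol_image_add (w : Fin n → ℝ) (s : Set (Fin n → ℝ)) :
    volume ((fun x => x + w) '' s) = volume s := by
  rw [Set.image_add_right]
  exact measure_preimage_add_right volume (-w) s

lemma mem_image_add {w u : Fin n → ℝ} {s : Set (Fin n → ℝ)} :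
    u ∈ (fun x => x + w) '' s ↔ u - w ∈ s := by
  rw [Set.image_add_right]
  simp [sub_eq_add_neg]

/-- The boundary part of a translated cuboid is null. -/
lemma null_edge (A : Matrix (Fin n) (Fin n) ℝ) (S : Finset (Fin n)) :
    volume (((fun y : Fin n → ℝ => y + cs A S) '' cuboid A) \
      interior ((fun y : Fin n → ℝ => y + cs A S) '' cuboid A)) = 0 := by
  have hpi : (fun y : Fin n → ℝ => y + cs A S) '' cuboid A
      = Set.pi Set.univ (fun i => Set.Icc (cs A S i) (A i i + cs A S i)) := by
    ext x
    rw [mem_trans]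
    simp only [Set.mem_pi, Set.mem_univ, forall_true_left, Set.mem_Icc, true_implies]
  rw [hpi]
  have hint : interior (Set.pi Set.univ (fun i => Set.Icc (cs A S i) (A i i + cs A S i)))
      = Set.pi Set.univ (fun i => Set.Ioo (cs A S i) (A i i + cs A S i)) := by
    rw [interior_pi_set Set.finite_univ]
    simp [interior_Icc]
  rw [hint]
  have h1 : volume (Set.pi Set.univ (fun i => Set.Icc (cs A S i) (A i i + cs A S i)))
      = ∏ i, ENNReal.ofReal (A i i) := by
    rw [volume_pi_pi]
    congr 1
    funext i
    rw [Real.volume_Icc]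
    congr 1
    ring
  have h2 : volume (Set.pi Set.univ (fun i => Set.Ioo (cs A S i) (A i i + cs A S i)))
      = ∏ i, ENNReal.ofReal (A i i) := by
    rw [volume_pi_pi]
    congr 1
    funext i
    rw [Real.volume_Ioo]
    congr 1
    ring
  rw [measure_diff (Set.pi_mono fun i _ => Set.Ioo_subset_Icc_self)
    ((MeasurableSet.univ_pi fun i => measurableSet_Ioo).nullMeasurableSet)
    (by rw [h2]; exact ENNReal.prod_ne_top fun i _ => ENNReal.ofReal_ne_top)]
  rw [h1, h2, tsub_self]

end TilingAux

open TilingAux in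
/-- Near the matrix `B = (n+1)I - J`, distinct lattice translates of `F_A` overlap
only in a set of measure zero. -/
theorem FA_translates_ae_disjoint_near_B (n : ℕ) (hn : 0 < n)
    (B : Matrix (Fin n) (Fin n) ℝ)
    (hB : B = ((n : ℝ) + 1) • (1 : Matrix (Fin n) (Fin n) ℝ) - Matrix.of fun _ _ => (1 : ℝ)) :
    ∃ ε > (0 : ℝ), ∀ A : Matrix (Fin n) (Fin n) ℝ,
      (∀ i j, |A i j - B i j| < ε) →
      ∀ y ∈ latticeOf A, ∀ z ∈ latticeOf A, y ≠ z →
        MeasureTheory.volume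
          (((fun x => x + y) '' FA A) ∩ ((fun x => x + z) '' FA A)) = 0 := by
  classical
  refine ⟨ee n, ee_pos, ?_⟩
  intro A hAB y hy z hz hyz
  have hBij : ∀ i j, B i j = if i = j then (n:ℝ) else -1 := by
    intro i j
    rw [hB]
    rcases eq_or_ne i j with rfl | h
    · simp [Matrix.one_apply]
    · simp [Matrix.one_apply, h]
  have hG : Good n A := by
    refine ⟨hn, fun i => ?_, fun i j hij => ?_⟩
    · have h := hAB i i
      rw [hBij i i, if_pos rfl] at h
      exact h
    · have h := hAB i j
      rw [hBij i j, if_neg hij] at h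
      simpa [sub_neg_eq_add] using h
  obtain ⟨vy, rfl⟩ := hy
  obtain ⟨vz, rfl⟩ := hz
  set y := A.mulVec fun i => ((vy i : ℤ) : ℝ) with hy'
  set z := A.mulVec fun i => ((vz i : ℤ) : ℝ) with hz'
  set v : Fin n → ℤ := vz - vy with hv
  set w : Fin n → ℝ := A.mulVec fun j => ((v j : ℤ) : ℝ) with hw
  have hwzy : w = z - y := by
    rw [hw, hy', hz']
    have hfun : (fun j => ((v j : ℤ) : ℝ))
        = (fun j => ((vz j : ℤ) : ℝ)) - fun j => ((vy j : ℤ) : ℝ) := by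
      funext j
      simp [hv]
    rw [hfun, Matrix.mulVec_sub]
  have hvne : v ≠ 0 := by
    intro h0
    apply hyz
    have hzero : (fun j => ((v j : ℤ) : ℝ)) = 0 := by
      funext j
      rw [h0]
      simp
    have hw0 : w = 0 := by rw [hw, hzero, Matrix.mulVec_zero]
    rw [hwzy] at hw0
    exact (sub_eq_zero.mp hw0).symm
  have hseteq : ((fun x => x + y) '' FA A) ∩ ((fun x => x + z) '' FA A)
      = (fun x => x + y) '' (FA A ∩ ((fun x => x + w) '' FA A)) := by
    ext u
    rw [Set.mem_inter_iff, mem_image_add, mem_image_add, mem_image_add,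
      Set.mem_inter_iff, mem_image_add]
    have huw : u - y - w = u - z := by rw [hwzy]; abel
    constructor
    · rintro ⟨h1, h2⟩
      exact ⟨h1, by rw [huw]; exact h2⟩
    · rintro ⟨h1, h2⟩
      exact ⟨h1, by rw [huw] at h2; exact h2⟩
  rw [hseteq, vol_image_add]
  have hsub : FA A ∩ ((fun x => x + w) '' FA A) ⊆
      ⋃ S : Finset (Fin n),
        ((((fun x => x + cs A S) '' cuboid A) \
            interior ((fun x => x + cs A S) '' cuboid A))
          ∪ ((fun x => x + w) '' (((fun x => x + cs A S) '' cuboid A) \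
            interior ((fun x => x + cs A S) '' cuboid A)))) := by
    rintro t ⟨ht1, ht2⟩
    have ht2' : t - w ∈ FA A := mem_image_add.mp ht2
    have htc : t ∈ cuboid A := FA_subset_cuboid A ht1
    have htc' : t - w ∈ cuboid A := FA_subset_cuboid A ht2'
    obtain ⟨S, hS, hcase⟩ := key_lemma hG v hvne t htc (by rw [← hw]; exact htc')
    refine Set.mem_iUnion.mpr ⟨S, ?_⟩
    rcases hcase with hc | hc
    · left
      exact ⟨mem_trans.mpr hc, FA_not_mem_interior hS ht1⟩
    · right
      rw [mem_image_add]
      refine ⟨mem_trans.mpr fun i => ?_, FA_not_mem_interior hS ht2'⟩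
      simp only [Pi.sub_apply, hw]
      exact hc i
  refine measure_mono_null hsub (MeasureTheory.measure_iUnion_null fun S =>
    MeasureTheory.measure_union_null ?_ ?_)
  · exact null_edge A S
  · rw [vol_image_add]
    exact null_edge A S
end

section
/- Let n be a positive integer and let A be a real n × n matrix such that every diagonal entry a_{i,i} is strictly positive, every off-diagonal entry a_{i,j} (i ≠ j) is strictly negative, and every row sum Σ_{j=1}^n a_{i,j} is strictly positive. Then the translates of F_A by the lattice Λ_A cover all of ℝ^n: ⋃_{z ∈ Λ_A} (F_A + z) = ℝ^n. -/
lemma exists_good {n : ℕ} {P G : (Fin n → ℤ) → Prop} (C : ℝ)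
    (hbound : ∀ v, P v → ((∑ j, v j : ℤ) : ℝ) ≤ C)
    (hstep : ∀ v, P v → ¬ G v → ∃ w, P w ∧ (∑ j, v j) < (∑ j, w j))
    (v0 : Fin n → ℤ) (h0 : P v0) : ∃ v, P v ∧ G v := by
  have key : ∀ k : ℕ, ∀ v, P v → C - ((∑ j, v j : ℤ) : ℝ) ≤ k → ∃ v, P v ∧ G v := by
    intro k
    induction k with
    | zero =>
      intro v hv hk
      by_cases hg : G v
      · exact ⟨v, hv, hg⟩
      · obtain ⟨w, hw, hlt⟩ := hstep v hv hg
        have h1 : (∑ j, v j) + 1 ≤ ∑ j, w j := hlt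
        have h2 : ((∑ j, v j : ℤ) : ℝ) + 1 ≤ ((∑ j, w j : ℤ) : ℝ) := by exact_mod_cast h1
        have h3 := hbound w hw
        simp only [Nat.cast_zero] at hk
        linarith
    | succ k ih =>
      intro v hv hk
      by_cases hg : G v
      · exact ⟨v, hv, hg⟩
      · obtain ⟨w, hw, hlt⟩ := hstep v hv hg
        have h1 : (∑ j, v j) + 1 ≤ ∑ j, w j := hlt
        have h2 : ((∑ j, v j : ℤ) : ℝ) + 1 ≤ ((∑ j, w j : ℤ) : ℝ) := by exact_mod_cast h1
        apply ih w hw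
        push_cast at hk h2 ⊢
        linarith
  exact key ⌈C - ((∑ j, v0 j : ℤ) : ℝ)⌉₊ v0 h0 (Nat.le_ceil _)

lemma coord_bound {n : ℕ} (hn : 0 < n) (A : Matrix (Fin n) (Fin n) ℝ)
    (hoff : ∀ i j, i ≠ j → A i j < 0) (hrow : ∀ i, 0 < ∑ j, A i j)
    (x : Fin n → ℝ) (B : ℝ) (hB : ∀ i, x i / ∑ k, A i k ≤ B)
    (v : Fin n → ℤ) (hv : ∀ i, A.mulVec (fun j => (v j : ℝ)) i ≤ x i) :
    ∀ j, (v j : ℝ) ≤ B := by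
  obtain ⟨j0, -, hj0⟩ := Finset.exists_max_image Finset.univ (fun j => v j)
    ⟨⟨0, hn⟩, Finset.mem_univ _⟩
  intro j
  have hjj0 : (v j : ℝ) ≤ (v j0 : ℝ) := by exact_mod_cast hj0 j (Finset.mem_univ j)
  have key : (v j0 : ℝ) * (∑ k, A j0 k) ≤ x j0 := by
    have h1 : ∑ k, A j0 k * (v j0 : ℝ) ≤ ∑ k, A j0 k * (v k : ℝ) := by
      apply Finset.sum_le_sum
      intro k _
      rcases eq_or_ne k j0 with rfl | hk
      · exact le_rfl
      · exact mul_le_mul_of_nonpos_left (by exact_mod_cast hj0 k (Finset.mem_univ k))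
          (le_of_lt (hoff j0 k (Ne.symm hk)))
    calc (v j0 : ℝ) * ∑ k, A j0 k = ∑ k, A j0 k * (v j0 : ℝ) := by
          rw [Finset.mul_sum]; exact Finset.sum_congr rfl fun k _ => mul_comm _ _
      _ ≤ ∑ k, A j0 k * (v k : ℝ) := h1
      _ = A.mulVec (fun j => (v j : ℝ)) j0 := rfl
      _ ≤ x j0 := hv j0
  have hd : (v j0 : ℝ) ≤ x j0 / ∑ k, A j0 k := (le_div_iff₀ (hrow j0)).mpr key
  exact hjj0.trans (hd.trans (hB j0))

lemma mulVec_add_indicator {n : ℕ} (A : Matrix (Fin n) (Fin n) ℝ)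
    (v : Fin n → ℤ) (S : Finset (Fin n)) (r : Fin n) :
    A.mulVec (fun j => ((v j + if j ∈ S then 1 else 0 : ℤ) : ℝ)) r
      = A.mulVec (fun j => (v j : ℝ)) r + ∑ i ∈ S, A r i := by
  simp only [Matrix.mulVec, dotProduct]
  push_cast
  simp [mul_add, Finset.sum_add_distrib, mul_ite, mul_one, mul_zero, Finset.sum_ite_mem]

lemma sum_add_indicator {n : ℕ} (v : Fin n → ℤ) (S : Finset (Fin n)) :
    ∑ j, (v j + if j ∈ S then 1 else 0) = (∑ j, v j) + S.card := by
  simp [Finset.sum_add_distrib, Finset.sum_ite_mem]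

/-- If `A` has positive diagonal, negative off-diagonal entries, and positive row sums,
then the lattice translates of `F_A` cover all of `ℝⁿ`. -/
theorem FA_translates_cover (n : ℕ) (hn : 0 < n) (A : Matrix (Fin n) (Fin n) ℝ)
    (hdiag : ∀ i, 0 < A i i) (hoff : ∀ i j, i ≠ j → A i j < 0)
    (hrow : ∀ i, 0 < ∑ j, A i j) :
    ⋃ z ∈ latticeOf A, (fun x => x + z) '' FA A = Set.univ := by
  have hne : (Finset.univ : Finset (Fin n)).Nonempty := ⟨⟨0, hn⟩, Finset.mem_univ _⟩
  ext x
  simp only [Set.mem_univ, iff_true]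
  set B : ℝ := Finset.univ.sup' hne (fun i => x i / ∑ k, A i k) with hBdef
  have hB : ∀ i, x i / ∑ k, A i k ≤ B := by
    intro i
    rw [hBdef]
    exact Finset.le_sup' (fun i => x i / ∑ k, A i k) (Finset.mem_univ i)
  have hbound : ∀ v : Fin n → ℤ, (∀ i, A.mulVec (fun j => (v j : ℝ)) i ≤ x i) →
      ((∑ j, v j : ℤ) : ℝ) ≤ n * B := by
    intro v hv
    have h := coord_bound hn A hoff hrow x B hB v hv
    calc ((∑ j, v j : ℤ) : ℝ) = ∑ j, ((v j : ℤ) : ℝ) := by push_cast; rfl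
      _ ≤ ∑ _j : Fin n, B := Finset.sum_le_sum fun j _ => h j
      _ = n * B := by simp [Finset.sum_const, mul_comm]
  -- Phase 1: find v with x - A v in the cuboid
  have phase1 : ∃ v : Fin n → ℤ,
      (fun i => x i - A.mulVec (fun j => (v j : ℝ)) i) ∈ cuboid A := by
    set N : ℕ := ⌈Finset.univ.sup' hne (fun i => -x i / ∑ k, A i k)⌉₊ with hNdef
    have hv0 : ∀ i, A.mulVec (fun _ : Fin n => ((-(N : ℤ) : ℤ) : ℝ)) i ≤ x i := by
      intro i
      have h1 : -x i / ∑ k, A i k ≤ (N : ℝ) :=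
        le_trans (Finset.le_sup' (fun i => -x i / ∑ k, A i k) (Finset.mem_univ i))
          (Nat.le_ceil _)
      have h2 : -x i ≤ (N : ℝ) * ∑ k, A i k := (div_le_iff₀ (hrow i)).mp h1
      have h3 : A.mulVec (fun _ : Fin n => ((-(N : ℤ) : ℤ) : ℝ)) i
          = (∑ k, A i k) * (-(N : ℝ)) := by
        simp only [Matrix.mulVec, dotProduct]
        push_cast
        rw [← Finset.sum_mul]
      rw [h3]; nlinarith
    obtain ⟨v, hv, hg⟩ := exists_good
      (P := fun v => ∀ i, A.mulVec (fun j => (v j : ℝ)) i ≤ x i)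
      (G := fun v => ∀ i, x i - A.mulVec (fun j => (v j : ℝ)) i ≤ A i i)
      (n * B) hbound
      (by
        intro v hv hg
        have hg' : ¬ ∀ i, x i - A.mulVec (fun j => (v j : ℝ)) i ≤ A i i := hg
        push_neg at hg'
        obtain ⟨i, hi⟩ := hg'
        refine ⟨fun j => v j + if j ∈ ({i} : Finset (Fin n)) then 1 else 0, ?_, ?_⟩
        · intro r
          rw [mulVec_add_indicator, Finset.sum_singleton]
          rcases eq_or_ne r i with rfl | hri
          · linarith
          · have := hoff r i hri
            linarith [hv r]
        · rw [sum_add_indicator, Finset.card_singleton]; omega)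
      (fun _ => -(N : ℤ)) hv0
    refine ⟨v, ?_⟩
    rw [cuboid, Set.mem_univ_pi]
    intro i
    exact ⟨by linarith [hv i], hg i⟩
  obtain ⟨v1, hv1⟩ := phase1
  -- Phase 2: find v with x - A v in the cuboid minus the removed translates
  obtain ⟨v, hvP, hvG⟩ := exists_good
    (P := fun v => (fun i => x i - A.mulVec (fun j => (v j : ℝ)) i) ∈ cuboid A)
    (G := fun v => (fun i => x i - A.mulVec (fun j => (v j : ℝ)) i) ∉
      ⋃ (S : Finset (Fin n)) (_ : S.Nonempty),
        (fun y : Fin n → ℝ => y + fun r => ∑ i ∈ S, A r i) '' cuboid A)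
    (n * B)
    (by
      intro v hv
      apply hbound
      intro i
      rw [cuboid, Set.mem_univ_pi] at hv
      linarith [(hv i).1])
    (by
      intro v hv hg
      rw [not_not] at hg
      simp only [Set.mem_iUnion, Set.mem_image] at hg
      obtain ⟨S, hS, c, hc, hceq⟩ := hg
      refine ⟨fun j => v j + if j ∈ S then 1 else 0, ?_, ?_⟩
      · have : (fun i => x i - A.mulVec
            (fun j => ((v j + if j ∈ S then 1 else 0 : ℤ) : ℝ)) i) = c := by
          funext i
          rw [mulVec_add_indicator]
          have := congrFun hceq i
          simp only [Pi.add_apply] at this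
          linarith
        show (fun i => x i - A.mulVec
            (fun j => ((v j + if j ∈ S then 1 else 0 : ℤ) : ℝ)) i) ∈ cuboid A
        rw [this]; exact hc
      · rw [sum_add_indicator]
        have := hS.card_pos
        omega)
    v1 hv1
  refine Set.mem_iUnion₂.mpr ⟨A.mulVec (fun j => (v j : ℝ)), ⟨v, rfl⟩,
    ⟨fun i => x i - A.mulVec (fun j => (v j : ℝ)) i, subset_closure ⟨hvP, hvG⟩, ?_⟩⟩
  funext i
  simp
end
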